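/- The substitution H_n(t) = (1/2)[σ_n(s) + s² + n(n+α)] with t = s² transforms the equation (t H_n'')² = [n - (2n+α)H_n']² - 4[n(n+α) + t H_n' - H_n] H_n'(H_n' - 1) into the σ-form of Painlevé III: (s σ_n'' - σ_n')² = 4(2σ_n - s σ_n')((σ_n')² - 4s²) + 2(θ₀² + θ_∞²)((σ_n')² + 4s²) - 16 θ₀ θ_∞ s σ_n', with θ₀ = α and θ_∞ = -2n - α. -/

import Mathlib

/-- The substitution `H_n(t) = (1/2)[σ_n(s) + s² + n(n+α)]` with `t = s²` transforms the
equation `(t H_n'')² = [n - (2n+α)H_n']² - 4[n(n+α) + t H_n' - H_n] H_n'(H_n' - 1)` into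
the σ-form of Painlevé III with `θ₀ = α`, `θ_∞ = -2n - α`. -/
theorem sigma_form_painleve_III
    (α : ℝ) (hα : α > -1) (n : ℕ) (hn : 1 ≤ n)
    (H : ℝ → ℝ) (hH : ContDiff ℝ 2 H)
    (heq : ∀ t : ℝ, 0 < t →
      (t * deriv (deriv H) t) ^ 2
        = ((n : ℝ) - (2 * n + α) * deriv H t) ^ 2
          - 4 * ((n : ℝ) * (n + α) + t * deriv H t - H t)
            * deriv H t * (deriv H t - 1))
    (σ : ℝ → ℝ)
    (hσ : ∀ s : ℝ, σ s = 2 * H (s ^ 2) - s ^ 2 - (n : ℝ) * (n + α)) :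
    ∀ s : ℝ, 0 < s →
      (s * deriv (deriv σ) s - deriv σ s) ^ 2
        = 4 * (2 * σ s - s * deriv σ s) * ((deriv σ s) ^ 2 - 4 * s ^ 2)
          + 2 * (α ^ 2 + (-2 * (n : ℝ) - α) ^ 2) * ((deriv σ s) ^ 2 + 4 * s ^ 2)
          - 16 * α * (-2 * (n : ℝ) - α) * s * deriv σ s := by
  have hσ' : σ = fun s => 2 * H (s ^ 2) - s ^ 2 - (n : ℝ) * (n + α) := funext hσ
  subst hσ'
  have hH1 : Differentiable ℝ H := hH.differentiable (by norm_num)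
  have hH2 : Differentiable ℝ (deriv H) :=
    ((contDiff_succ_iff_deriv.mp
      (by exact_mod_cast hH : ContDiff ℝ (1 + 1) H)).2.2).differentiable (by norm_num)
  have hsq : ∀ s : ℝ, HasDerivAt (fun s : ℝ => s ^ 2) (2 * s) s := by
    intro s; simpa using hasDerivAt_pow 2 s
  have hd1 : ∀ s : ℝ,
      HasDerivAt (fun s : ℝ => 2 * H (s ^ 2) - s ^ 2 - (n : ℝ) * (n + α))
        (4 * s * deriv H (s ^ 2) - 2 * s) s := by
    intro s
    have h1 : HasDerivAt (fun s : ℝ => H (s ^ 2)) (deriv H (s ^ 2) * (2 * s)) s :=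
      (hH1.differentiableAt.hasDerivAt).comp s (hsq s)
    have := ((h1.const_mul 2).sub (hsq s)).sub_const ((n : ℝ) * (n + α))
    exact this.congr_deriv (by ring)
  have hd1' : deriv (fun s : ℝ => 2 * H (s ^ 2) - s ^ 2 - (n : ℝ) * (n + α))
      = fun s : ℝ => 4 * s * deriv H (s ^ 2) - 2 * s := funext fun s => (hd1 s).deriv
  intro s hs
  have hd2 : HasDerivAt (fun s : ℝ => 4 * s * deriv H (s ^ 2) - 2 * s)
      (4 * deriv H (s ^ 2) + 4 * s * (deriv (deriv H) (s ^ 2) * (2 * s)) - 2) s := by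
    have h1 : HasDerivAt (fun s : ℝ => deriv H (s ^ 2)) (deriv (deriv H) (s ^ 2) * (2 * s)) s :=
      (hH2.differentiableAt.hasDerivAt).comp s (hsq s)
    have h2 : HasDerivAt (fun s : ℝ => 4 * s) 4 s := by
      simpa using (hasDerivAt_id s).const_mul (4 : ℝ)
    have := (h2.mul h1).sub ((hasDerivAt_id s).const_mul (2 : ℝ))
    exact this.congr_deriv (by ring)
  rw [hd1']
  rw [hd2.deriv]
  have key := heq (s ^ 2) (by positivity)
  simp only [] at *
  linear_combination (64 * s ^ 2) * key
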